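/- Let γ: U → S² be a C³ curve satisfying span{γ(θ), γ'(θ), γ''(θ)} = ℝ³ for all θ ∈ U. Define η(θ) = (γ(θ) × γ'(θ))/|γ(θ) × γ'(θ)|. Then η''(θ) · (η(θ) × η'(θ)) = |γ'(θ)|^(-3) · (γ(θ) · (γ'(θ) × γ''(θ)))² ≠ 0, and consequently span{η(θ), η'(θ), η''(θ)} = ℝ³ for every θ ∈ U. -/

import Mathlib

open scoped RealInnerProductSpace

/-- Cross product on `ℝ³` (as `EuclideanSpace ℝ (Fin 3)`). -/
noncomputable def cross3 (a b : EuclideanSpace ℝ (Fin 3)) : EuclideanSpace ℝ (Fin 3) :=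
  (WithLp.equiv 2 (Fin 3 → ℝ)).symm
    ![a 1 * b 2 - a 2 * b 1, a 2 * b 0 - a 0 * b 2, a 0 * b 1 - a 1 * b 0]

local notation "E3" => EuclideanSpace ℝ (Fin 3)

lemma cross3_apply (a b : E3) (i : Fin 3) :
    cross3 a b i = ![a 1 * b 2 - a 2 * b 1, a 2 * b 0 - a 0 * b 2, a 0 * b 1 - a 1 * b 0] i := rfl

lemma inner3 (a b : E3) : ⟪a, b⟫ = a 0 * b 0 + a 1 * b 1 + a 2 * b 2 := by
  simp [PiLp.inner_apply, Fin.sum_univ_three, mul_comm]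

lemma span_iff_det (x y z : E3) :
    Submodule.span ℝ ({x, y, z} : Set E3) = ⊤ ↔ ⟪x, cross3 y z⟫ ≠ 0 := by
  classical
  set e := (WithLp.linearEquiv 2 ℝ (Fin 3 → ℝ)) with he
  set M : Matrix (Fin 3) (Fin 3) ℝ := Matrix.of ![e x, e y, e z] with hM
  have hrange : Set.range M = {e x, e y, e z} := by
    ext u; constructor
    · rintro ⟨i, rfl⟩
      fin_cases i
      · exact Or.inl rfl
      · exact Or.inr (Or.inl rfl)
      · exact Or.inr (Or.inr rfl)
    · rintro (rfl | rfl | rfl)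
      exacts [⟨0, rfl⟩, ⟨1, rfl⟩, ⟨2, rfl⟩]
  have hdet : M.det = ⟪x, cross3 y z⟫ := by
    rw [Matrix.det_fin_three, inner3]
    simp only [hM, Matrix.of_apply, Matrix.cons_val_zero, Matrix.cons_val_one,
      Matrix.head_cons, Matrix.cons_val_two, Matrix.tail_cons, cross3_apply]
    have hee : ∀ (u : E3) (i : Fin 3), e u i = u i := fun _ _ => rfl
    simp only [hee]
    show _ = x 0 * (y 1 * z 2 - y 2 * z 1) + x 1 * (y 2 * z 0 - y 0 * z 2)
      + x 2 * (y 0 * z 1 - y 1 * z 0)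
    ring
  have h1 : Submodule.span ℝ ({x, y, z} : Set E3) = ⊤ ↔
      Submodule.span ℝ (Set.range M) = ⊤ := by
    rw [hrange]
    have himg : (e : E3 →ₗ[ℝ] (Fin 3 → ℝ)) '' ({x, y, z} : Set E3)
        = ({e x, e y, e z} : Set (Fin 3 → ℝ)) := by
      simp [Set.image_insert_eq]
    rw [← himg, Submodule.span_image (e : E3 →ₗ[ℝ] (Fin 3 → ℝ))]
    constructor
    · intro h; rw [h, Submodule.map_top]; exact LinearEquiv.range e
    · intro h
      apply Submodule.map_injective_of_injective (f := (e : E3 →ₗ[ℝ] (Fin 3 → ℝ)))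
        e.injective
      rw [h, Submodule.map_top]
      exact (LinearEquiv.range e).symm
  rw [h1, show Set.range M = Set.range M.row from rfl, ← range_vecMulLinear, LinearMap.range_eq_top]
  rw [show (⇑M.vecMulLinear : (Fin 3 → ℝ) → (Fin 3 → ℝ)) = M.vecMul from rfl]
  rw [Matrix.vecMul_surjective_iff_isUnit, Matrix.isUnit_iff_isUnit_det,
    isUnit_iff_ne_zero, hdet]

lemma triple_cyclic (x y z : E3) : ⟪x, cross3 y z⟫ = ⟪z, cross3 x y⟫ := by
  simp only [inner3, cross3_apply]
  show x 0 * (y 1 * z 2 - y 2 * z 1) + x 1 * (y 2 * z 0 - y 0 * z 2)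
      + x 2 * (y 0 * z 1 - y 1 * z 0)
    = z 0 * (x 1 * y 2 - x 2 * y 1) + z 1 * (x 2 * y 0 - x 0 * y 2)
      + z 2 * (x 0 * y 1 - x 1 * y 0)
  ring

lemma cross3_zero_left (b : E3) : cross3 0 b = 0 := by
  ext i
  fin_cases i <;> simp [cross3_apply]

lemma lagrange (a b : E3) :
    ⟪cross3 a b, cross3 a b⟫ = ⟪a, a⟫ * ⟪b, b⟫ - ⟪a, b⟫ ^ 2 := by
  simp only [inner3, cross3_apply]
  show ((a 1 * b 2 - a 2 * b 1) * (a 1 * b 2 - a 2 * b 1)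
      + (a 2 * b 0 - a 0 * b 2) * (a 2 * b 0 - a 0 * b 2)
      + (a 0 * b 1 - a 1 * b 0) * (a 0 * b 1 - a 1 * b 0) : ℝ)
    = (a 0 * a 0 + a 1 * a 1 + a 2 * a 2) * (b 0 * b 0 + b 1 * b 1 + b 2 * b 2)
      - (a 0 * b 0 + a 1 * b 1 + a 2 * b 2) ^ 2
  ring

lemma main_identity (a b c d : E3) (S A p : ℝ) :
    ⟪(p • ((cross3 c b + cross3 b c) + (cross3 b c + cross3 a d)) +
          A • (cross3 b b + cross3 a c)) +
        (A • (cross3 b b + cross3 a c) + S • cross3 a b),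
      cross3 (p • cross3 a b)
        (p • (cross3 b b + cross3 a c) + A • cross3 a b)⟫
    = p * p * p * ⟪a, cross3 b c⟫ ^ 2 := by
  simp only [inner3, cross3_apply, PiLp.add_apply, PiLp.smul_apply, smul_eq_mul,
    Matrix.cons_val_zero, Matrix.cons_val_one, Matrix.head_cons, Matrix.cons_val_two,
    Matrix.tail_cons]
  ring

lemma hasDerivAt_comp3 {f : ℝ → E3} {f' : E3} {x : ℝ} (h : HasDerivAt f f' x) (i : Fin 3) :
    HasDerivAt (fun t => f t i) (f' i) x := by
  exact ((EuclideanSpace.proj (𝕜 := ℝ) i).hasFDerivAt.comp_hasDerivAt x h)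

lemma hasDerivAt_e3 {f : ℝ → E3} {f' : E3} {x : ℝ}
    (h : ∀ i, HasDerivAt (fun t => f t i) (f' i) x) : HasDerivAt f f' x := by
  have h' : HasDerivAt (fun t => (EuclideanSpace.equiv (Fin 3) ℝ) (f t))
      ((EuclideanSpace.equiv (Fin 3) ℝ) f') x := hasDerivAt_pi.2 h
  have := ((EuclideanSpace.equiv (Fin 3) ℝ).symm : (Fin 3 → ℝ) →L[ℝ] E3).hasFDerivAt.comp_hasDerivAt x h'
  exact this

lemma hasDerivAt_cross {f g : ℝ → E3} {f' g' : E3} {x : ℝ}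
    (hf : HasDerivAt f f' x) (hg : HasDerivAt g g' x) :
    HasDerivAt (fun t => cross3 (f t) (g t)) (cross3 f' (g x) + cross3 (f x) g') x := by
  apply hasDerivAt_e3
  intro i
  have h1 := hasDerivAt_comp3 hf
  have h2 := hasDerivAt_comp3 hg
  fin_cases i <;>
  · norm_num [cross3_apply]
    first
    | exact (((h1 1).mul (h2 2)).sub ((h1 2).mul (h2 1))).congr_deriv (by ring)
    | exact (((h1 2).mul (h2 0)).sub ((h1 0).mul (h2 2))).congr_deriv (by ring)
    | exact (((h1 0).mul (h2 1)).sub ((h1 1).mul (h2 0))).congr_deriv (by ring)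

/-- If `γ : U → S²` is a C³ curve with `span{γ, γ', γ''} = ℝ³` on `U`, then
`η = γ × γ' / |γ × γ'|` satisfies
`η''·(η × η') = |γ'|⁻³ (γ·(γ' × γ''))² ≠ 0`; consequently `span{η, η', η''} = ℝ³` on `U`. -/
theorem stmt_7 (U : Set ℝ) (hU : IsOpen U)
    (γ γ' γ'' γ''' : ℝ → EuclideanSpace ℝ (Fin 3))
    (hsphere : ∀ θ ∈ U, ‖γ θ‖ = 1)
    (hd1 : ∀ θ ∈ U, HasDerivAt γ (γ' θ) θ)
    (hd2 : ∀ θ ∈ U, HasDerivAt γ' (γ'' θ) θ)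
    (hd3 : ∀ θ ∈ U, HasDerivAt γ'' (γ''' θ) θ)
    (hcont : ContinuousOn γ''' U)
    (hspan : ∀ θ ∈ U, Submodule.span ℝ {γ θ, γ' θ, γ'' θ} = ⊤)
    (η : ℝ → EuclideanSpace ℝ (Fin 3))
    (hη : ∀ θ ∈ U, η θ = ‖cross3 (γ θ) (γ' θ)‖⁻¹ • cross3 (γ θ) (γ' θ)) :
    ∀ θ ∈ U,
      ⟪deriv (deriv η) θ, cross3 (η θ) (deriv η θ)⟫
          = ‖γ' θ‖ ^ (-3 : ℤ) * ⟪γ θ, cross3 (γ' θ) (γ'' θ)⟫ ^ 2 ∧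
      ⟪deriv (deriv η) θ, cross3 (η θ) (deriv η θ)⟫ ≠ 0 ∧
      Submodule.span ℝ {η θ, deriv η θ, deriv (deriv η) θ} = ⊤ := by
  -- basic consequences of the span hypothesis
  have hD : ∀ t ∈ U, ⟪γ t, cross3 (γ' t) (γ'' t)⟫ ≠ 0 := fun t ht =>
    (span_iff_det _ _ _).1 (hspan t ht)
  have hb : ∀ t ∈ U, γ' t ≠ 0 := by
    intro t ht h
    apply hD t ht
    rw [h, cross3_zero_left, inner_zero_right]
  have hg0 : ∀ t ∈ U, (0:ℝ) < ⟪γ' t, γ' t⟫ := by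
    intro t ht
    rw [real_inner_self_eq_norm_mul_norm]
    have := norm_pos_iff.2 (hb t ht)
    positivity
  -- orthogonality of γ and γ'
  have hone : ∀ t ∈ U, ⟪γ t, γ t⟫ = (1:ℝ) := by
    intro t ht
    rw [real_inner_self_eq_norm_mul_norm, hsphere t ht]; norm_num
  have horth : ∀ t ∈ U, ⟪γ t, γ' t⟫ = (0:ℝ) := by
    intro t ht
    have h1 : HasDerivAt (fun s => (⟪γ s, γ s⟫:ℝ)) (⟪γ t, γ' t⟫ + ⟪γ' t, γ t⟫) t :=
      (hd1 t ht).inner ℝ (hd1 t ht)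
    have h2 : (fun s => (⟪γ s, γ s⟫:ℝ)) =ᶠ[nhds t] fun _ => (1:ℝ) := by
      filter_upwards [hU.mem_nhds ht] with s hs
      exact hone s hs
    have h3 : HasDerivAt (fun s => (⟪γ s, γ s⟫:ℝ)) 0 t :=
      (hasDerivAt_const t (1:ℝ)).congr_of_eventuallyEq h2
    have h4 := h1.unique h3
    rw [real_inner_comm (γ' t) (γ t)] at h4
    rw [real_inner_comm]
    linarith
  -- the norming function
  set w : ℝ → ℝ := fun t => Real.sqrt ⟪γ' t, γ' t⟫ with hw_def
  have hwpos : ∀ t ∈ U, 0 < w t := fun t ht => Real.sqrt_pos.2 (hg0 t ht)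
  have hwnorm : ∀ t ∈ U, w t = ‖γ' t‖ := fun t ht =>
    (norm_eq_sqrt_real_inner (γ' t)).symm
  have hnv : ∀ t ∈ U, ‖cross3 (γ t) (γ' t)‖ = w t := by
    intro t ht
    rw [norm_eq_sqrt_real_inner, hw_def]
    congr 1
    rw [lagrange, horth t ht, hone t ht]; ring
  set v : ℝ → E3 := fun t => cross3 (γ t) (γ' t) with hv_def
  set vd : ℝ → E3 := fun t => cross3 (γ' t) (γ' t) + cross3 (γ t) (γ'' t) with hvd_def
  have hvder : ∀ t ∈ U, HasDerivAt v (vd t) t := fun t ht =>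
    hasDerivAt_cross (hd1 t ht) (hd2 t ht)
  -- derivative of w
  set w1 : ℝ → ℝ := fun t => (⟪γ' t, γ'' t⟫ + ⟪γ'' t, γ' t⟫) * (2 * w t)⁻¹ with hw1_def
  have hwder : ∀ t ∈ U, HasDerivAt w (w1 t) t := by
    intro t ht
    have h1 : HasDerivAt (fun s => (⟪γ' s, γ' s⟫:ℝ)) (⟪γ' t, γ'' t⟫ + ⟪γ'' t, γ' t⟫) t :=
      (hd2 t ht).inner ℝ (hd2 t ht)
    have := (Real.hasDerivAt_sqrt (ne_of_gt (hg0 t ht))).comp t h1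
    refine this.congr_deriv ?_
    show _ = (⟪γ' t, γ'' t⟫ + ⟪γ'' t, γ' t⟫) * (2 * Real.sqrt ⟪γ' t, γ' t⟫)⁻¹
    ring
  -- derivative of φ = w⁻¹
  set φ : ℝ → ℝ := fun t => (w t)⁻¹ with hφ_def
  set φ1 : ℝ → ℝ := fun t => -(w1 t) / (w t) ^ 2 with hφ1_def
  have hφder : ∀ t ∈ U, HasDerivAt φ (φ1 t) t := fun t ht =>
    (hwder t ht).inv (ne_of_gt (hwpos t ht))
  -- first derivative of η
  set E : ℝ → E3 := fun t => φ t • vd t + φ1 t • v t with hE_def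
  have hηF : ∀ t ∈ U, η =ᶠ[nhds t] fun s => φ s • v s := by
    intro t ht
    filter_upwards [hU.mem_nhds ht] with s hs
    rw [hη s hs, hnv s hs]
  have hηder : ∀ t ∈ U, HasDerivAt η (E t) t := fun t ht =>
    (((hφder t ht).smul (hvder t ht)).congr_of_eventuallyEq (hηF t ht))
  have hderiv1 : ∀ t ∈ U, deriv η t = E t := fun t ht => (hηder t ht).deriv
  -- second derivative at θ
  intro θ hθ
  have hwne : w θ ≠ 0 := ne_of_gt (hwpos θ hθ)
  -- derivative of w1 at θ
  have hnum : HasDerivAt (fun t => (⟪γ' t, γ'' t⟫:ℝ) + ⟪γ'' t, γ' t⟫)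
      ((⟪γ' θ, γ''' θ⟫ + ⟪γ'' θ, γ'' θ⟫) + (⟪γ'' θ, γ'' θ⟫ + ⟪γ''' θ, γ' θ⟫)) θ :=
    ((hd2 θ hθ).inner ℝ (hd3 θ hθ)).add ((hd3 θ hθ).inner ℝ (hd2 θ hθ))
  have hden : HasDerivAt (fun t => (2 * w t)⁻¹)
      (-(2 * w1 θ) / (2 * w θ) ^ 2) θ :=
    HasDerivAt.inv ((hwder θ hθ).const_mul 2) (by positivity)
  have hw1der : HasDerivAt w1 _ θ := hnum.mul hden
  have hφ1der : HasDerivAt φ1 _ θ :=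
    HasDerivAt.div hw1der.neg ((hwder θ hθ).pow 2) (by positivity)
  have hvdder : HasDerivAt vd
      ((cross3 (γ'' θ) (γ' θ) + cross3 (γ' θ) (γ'' θ)) +
        (cross3 (γ' θ) (γ'' θ) + cross3 (γ θ) (γ''' θ))) θ :=
    (hasDerivAt_cross (hd2 θ hθ) (hd2 θ hθ)).add (hasDerivAt_cross (hd1 θ hθ) (hd3 θ hθ))
  have hEder : HasDerivAt E _ θ :=
    ((hφder θ hθ).smul hvdder).add (hφ1der.smul (hvder θ hθ))
  have hevE : deriv η =ᶠ[nhds θ] E := by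
    filter_upwards [hU.mem_nhds hθ] with s hs
    exact hderiv1 s hs
  have hddη := (hEder.congr_of_eventuallyEq hevE).deriv
  -- put everything in shape
  have hηθ : η θ = φ θ • cross3 (γ θ) (γ' θ) := by
    rw [hη θ hθ, hnv θ hθ]
  have hd1θ : deriv η θ = φ θ • (cross3 (γ' θ) (γ' θ) + cross3 (γ θ) (γ'' θ)) +
      φ1 θ • cross3 (γ θ) (γ' θ) := hderiv1 θ hθ
  have key : ⟪deriv (deriv η) θ, cross3 (η θ) (deriv η θ)⟫
      = φ θ * φ θ * φ θ * ⟪γ θ, cross3 (γ' θ) (γ'' θ)⟫ ^ 2 := by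
    rw [hddη, hηθ, hd1θ]
    exact main_identity (γ θ) (γ' θ) (γ'' θ) (γ''' θ) _ _ _
  have hzero : φ θ * φ θ * φ θ * ⟪γ θ, cross3 (γ' θ) (γ'' θ)⟫ ^ 2 ≠ 0 := by
    have h : (w θ)⁻¹ ≠ 0 := inv_ne_zero hwne
    exact mul_ne_zero (mul_ne_zero (mul_ne_zero h h) h) (pow_ne_zero 2 (hD θ hθ))
  refine ⟨?_, ?_, ?_⟩
  · rw [key]
    have h3 : ‖γ' θ‖ ^ (-3:ℤ) = φ θ * φ θ * φ θ := by
      rw [← hwnorm θ hθ, hφ_def]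
      rw [show (-3:ℤ) = -((3:ℕ):ℤ) by norm_num, zpow_neg, zpow_natCast]
      ring
    rw [h3]
  · rw [key]; exact hzero
  · rw [span_iff_det, triple_cyclic, key]
    exact hzero
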